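/- Let M be a compact metric space, V : M → ℝ continuous, C ⊆ M a subset, x ∈ M, and U ⊆ M an open set with x ∈ U and with closure(U) ∩ C = {x}. Let w : ℝ → M be continuous such that V ∘ w is monotone non-decreasing, every point of the ω-limit set of w belongs to C, and there exists t₀ ∈ ℝ with w(t₀) ∈ U and V(w(t₀)) > V(y) for every y in the topological frontier of U. Then w(t) → x as t → ∞. -/
import Mathlib


open Filter Topology

/-- The ω-limit set of a function `w : ℝ → M`: points `p` for which there is a strictly
increasing sequence `t n → ∞` with `w (t n) → p`. -/
def omegaLimitSet {M : Type*} [MetricSpace M] (w : ℝ → M) : Set M :=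
  {p | ∃ t : ℕ → ℝ, StrictMono t ∧ Tendsto t atTop atTop ∧
    Tendsto (fun n => w (t n)) atTop (𝓝 p)}

/-- Abstract attractivity lemma: in a compact metric space, if `V ∘ w` is non-decreasing,
every ω-limit point of `w` lies in `C`, `closure U ∩ C = {x}` for an open `U ∋ x`, and at
some time `t₀` the curve is in `U` with `V (w t₀)` larger than `V` on the frontier of `U`,
then `w t → x` as `t → ∞`. -/
theorem stmt_17 {M : Type*} [MetricSpace M] [CompactSpace M]
    (V : M → ℝ) (hV : Continuous V)
    (C : Set M) (x : M) (U : Set M) (hU : IsOpen U) (hxU : x ∈ U)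
    (hclos : closure U ∩ C = {x})
    (w : ℝ → M) (hw : Continuous w)
    (hmono : Monotone (V ∘ w))
    (homega : omegaLimitSet w ⊆ C)
    (t₀ : ℝ) (ht₀ : w t₀ ∈ U)
    (hfront : ∀ y ∈ frontier U, V y < V (w t₀)) :
    Tendsto w atTop (𝓝 x) := by
  -- Step 1: the curve stays in U after time t₀.
  have hstay : ∀ s ≥ t₀, w s ∈ U := by
    intro s hs
    by_contra hsU
    set S : Set ℝ := Set.Icc t₀ s ∩ w ⁻¹' Uᶜ with hS
    have hSne : S.Nonempty := ⟨s, ⟨⟨hs, le_refl s⟩, hsU⟩⟩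
    have hSclosed : IsClosed S := isClosed_Icc.inter (hU.isClosed_compl.preimage hw)
    have hSbdd : BddBelow S := ⟨t₀, fun t ht => ht.1.1⟩
    set τ := sInf S with hτ
    have hτS : τ ∈ S := hSclosed.csInf_mem hSne hSbdd
    have hτt₀ : t₀ < τ := lt_of_le_of_ne hτS.1.1 (fun h => hτS.2 (h ▸ ht₀))
    have hIco : Set.Ico t₀ τ ⊆ w ⁻¹' U := by
      intro t ht
      by_contra htU
      exact absurd (csInf_le hSbdd ⟨⟨ht.1, ht.2.le.trans hτS.1.2⟩, htU⟩) (not_le.mpr ht.2)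
    have hτclos : w τ ∈ closure U := by
      have h1 : τ ∈ closure (Set.Ico t₀ τ) := by
        rw [closure_Ico (ne_of_lt hτt₀)]
        exact ⟨hτt₀.le, le_refl τ⟩
      exact hw.closure_preimage_subset U (closure_mono hIco h1)
    have hτfront : w τ ∈ frontier U := by
      rw [frontier, hU.interior_eq]
      exact ⟨hτclos, hτS.2⟩
    exact absurd (hmono hτS.1.1) (not_le.mpr (hfront _ hτfront))
  -- Step 2: convergence to x.
  by_contra hnot
  rw [Metric.tendsto_atTop] at hnot
  push_neg at hnot
  obtain ⟨ε, hε, hfreq⟩ := hnot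
  have hpick : ∀ a : ℝ, ∃ b, a + 1 ≤ b ∧ ε ≤ dist (w b) x := by
    intro a
    obtain ⟨b, hb, hb'⟩ := hfreq (a + 1)
    exact ⟨b, hb, hb'⟩
  choose g hg1 hg2 using hpick
  set t : ℕ → ℝ := fun n => g^[n] (g t₀) with ht
  have ht0 : ∀ n, t (n + 1) = g (t n) := fun n => Function.iterate_succ_apply' g n (g t₀)
  have hstep : ∀ n, t n + 1 ≤ t (n + 1) := by intro n; rw [ht0]; exact hg1 (t n)
  have htmono : StrictMono t :=
    strictMono_nat_of_lt_succ fun n => lt_of_lt_of_le (lt_add_one _) (hstep n)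
  have hlb : ∀ n : ℕ, t 0 + n ≤ t n := by
    intro n
    induction n with
    | zero => simp
    | succ k ih =>
      have := hstep k
      push_cast
      linarith
  have htop : Tendsto t atTop atTop :=
    tendsto_atTop_mono hlb (tendsto_atTop_add_const_left _ _ tendsto_natCast_atTop_atTop)
  have hdist : ∀ n, ε ≤ dist (w (t n)) x := by
    intro n
    cases n with
    | zero => exact hg2 t₀
    | succ k => rw [ht0]; exact hg2 (t k)
  obtain ⟨p, -, φ, hφ, hconv⟩ :=
    isCompact_univ.tendsto_subseq (x := fun n => w (t n)) (fun n => Set.mem_univ _)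
  have htopφ : Tendsto (t ∘ φ) atTop atTop := htop.comp hφ.tendsto_atTop
  have hpω : p ∈ omegaLimitSet w :=
    ⟨t ∘ φ, htmono.comp hφ, htopφ, hconv⟩
  have hpclos : p ∈ closure U := by
    refine mem_closure_of_tendsto hconv ?_
    filter_upwards [htopφ.eventually_ge_atTop t₀] with n hn
    exact hstay _ hn
  have hpx : p = x := by
    have : p ∈ closure U ∩ C := ⟨hpclos, homega hpω⟩
    rwa [hclos, Set.mem_singleton_iff] at this
  have hεp : ε ≤ dist p x := by
    have hd : Tendsto (fun n => dist (w (t (φ n))) x) atTop (𝓝 (dist p x)) :=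
      hconv.dist tendsto_const_nhds
    exact ge_of_tendsto hd (Eventually.of_forall fun n => hdist (φ n))
  rw [hpx, dist_self] at hεp
  exact absurd hεp (not_le.mpr hε)
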